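/- For positive integers n, k, r and ℓ, the mixed associated Stirling number of the second kind satisfies S_{≥ℓ}(n,k,r) = Σ_{i=r}^{n} (n choose i) · {i brace r}_{≥ℓ} · {n−i brace k−1}_{≥ℓ} · (k−1)!. -/

import Mathlib

open Finset

section Aux

variable {α : Type*} [DecidableEq α]

/-- `q` is the set of parts of a partition of `S` into `r` blocks, each of size `≥ l`. -/
def PartsCond (l r : ℕ) (S : Finset α) (q : Finset (Finset α)) : Prop :=
  q.SupIndep id ∧ q.sup id = S ∧ ⊥ ∉ q ∧ q.card = r ∧ ∀ p ∈ q, l ≤ p.card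

/-- Partitions of `S` with conditions correspond to their part-sets. -/
def toPartsEquiv (l r : ℕ) (S : Finset α) :
    {P : Finpartition S // P.parts.card = r ∧ ∀ p ∈ P.parts, l ≤ p.card} ≃
      {q : Finset (Finset α) // PartsCond l r S q} where
  toFun P := ⟨P.1.parts, P.1.supIndep, P.1.sup_parts, P.1.bot_notMem, P.2.1, P.2.2⟩
  invFun q := ⟨⟨q.1, q.2.1, q.2.2.1, q.2.2.2.1⟩, q.2.2.2.2.1, q.2.2.2.2.2⟩
  left_inv P := Subtype.ext (Finpartition.ext rfl)
  right_inv q := rfl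

lemma natCard_partitions (l r : ℕ) (S : Finset α) :
    Nat.card {P : Finpartition S // P.parts.card = r ∧ ∀ p ∈ P.parts, l ≤ p.card} =
      Nat.card {q : Finset (Finset α) // PartsCond l r S q} :=
  Nat.card_congr (toPartsEquiv l r S)

variable {β : Type*} [DecidableEq β]

lemma preimage_image' {g : α → β} (hg : Function.Injective g) (A : Finset α) :
    (A.image g).preimage g hg.injOn = A := by
  ext a
  simp [Finset.mem_preimage, Finset.mem_image, hg.eq_iff]

lemma recover_image [Fintype α] {g : α → β} (hg : Function.Injective g)
    {S : Finset β} (hs : Finset.univ.image g = S) {t : Finset β} (ht : t ⊆ S) :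
    (t.preimage g hg.injOn).image g = t := by
  classical
  rw [Finset.image_preimage]
  apply Finset.filter_true_of_mem
  intro x hx
  have hx' := ht hx
  rw [← hs, Finset.mem_image] at hx'
  obtain ⟨a, -, rfl⟩ := hx'
  exact ⟨a, rfl⟩

/-- Transport of part-sets along an injection with image `S`. -/
noncomputable def transportQ (l r : ℕ) [Fintype α] {g : α → β}
    (hg : Function.Injective g) {S : Finset β} (hs : Finset.univ.image g = S) :
    {q : Finset (Finset α) // PartsCond l r Finset.univ q} ≃
      {q : Finset (Finset β) // PartsCond l r S q} where
  toFun q := ⟨q.1.image (Finset.image g), by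
    obtain ⟨q, h1, h2, h3, h4, h5⟩ := q
    refine ⟨?_, ?_, ?_, ?_, ?_⟩
    · rw [Finset.supIndep_iff_pairwiseDisjoint]
      rintro t1 ht1 t2 ht2 hne
      simp only [Finset.coe_image, Set.mem_image, Finset.mem_coe] at ht1 ht2
      obtain ⟨A1, hA1, rfl⟩ := ht1
      obtain ⟨A2, hA2, rfl⟩ := ht2
      have hA : A1 ≠ A2 := fun h => hne (by rw [h])
      exact (Finset.disjoint_image hg).2
        ((Finset.supIndep_iff_pairwiseDisjoint.1 h1) hA1 hA2 hA)
    · ext b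
      rw [Finset.mem_sup, ← hs]
      constructor
      · rintro ⟨t, ht, hb⟩
        simp only [Finset.mem_image] at ht
        obtain ⟨A, hA, rfl⟩ := ht
        simp only [id] at hb
        rw [Finset.mem_image] at hb
        obtain ⟨a, ha, rfl⟩ := hb
        exact Finset.mem_image_of_mem g (Finset.mem_univ a)
      · intro hb
        rw [Finset.mem_image] at hb
        obtain ⟨a, -, rfl⟩ := hb
        have : a ∈ q.sup id := by rw [h2]; exact Finset.mem_univ a
        rw [Finset.mem_sup] at this
        obtain ⟨A, hA, haA⟩ := this
        exact ⟨A.image g, Finset.mem_image_of_mem _ hA,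
          Finset.mem_image_of_mem g haA⟩
    · intro hbot
      rw [Finset.mem_image] at hbot
      obtain ⟨A, hA, hAe⟩ := hbot
      rw [show (⊥ : Finset β) = ∅ from rfl, Finset.image_eq_empty] at hAe
      exact h3 (by rwa [hAe] at hA)
    · rw [Finset.card_image_of_injective _ (Finset.image_injective hg)]; exact h4
    · intro p hp
      rw [Finset.mem_image] at hp
      obtain ⟨A, hA, rfl⟩ := hp
      rw [Finset.card_image_of_injective _ hg]
      exact h5 A hA⟩
  invFun q := ⟨q.1.image (fun t => t.preimage g hg.injOn), by
    obtain ⟨q, h1, h2, h3, h4, h5⟩ := q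
    have hsub : ∀ t ∈ q, t ⊆ S := fun t ht => h2 ▸ Finset.le_sup (f := id) ht
    have hrec : ∀ t ∈ q, (t.preimage g hg.injOn).image g = t := fun t ht =>
      recover_image hg hs (hsub t ht)
    refine ⟨?_, ?_, ?_, ?_, ?_⟩
    · rw [Finset.supIndep_iff_pairwiseDisjoint]
      rintro t1 ht1 t2 ht2 hne
      simp only [Finset.coe_image, Set.mem_image, Finset.mem_coe] at ht1 ht2
      obtain ⟨A1, hA1, rfl⟩ := ht1
      obtain ⟨A2, hA2, rfl⟩ := ht2
      have hA : A1 ≠ A2 := fun h => hne (by rw [h])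
      have hd : Disjoint A1 A2 := (Finset.supIndep_iff_pairwiseDisjoint.1 h1) hA1 hA2 hA
      show Disjoint (A1.preimage g hg.injOn) (A2.preimage g hg.injOn)
      rw [Finset.disjoint_left] at hd ⊢
      intro a ha1 ha2
      rw [Finset.mem_preimage] at ha1 ha2
      exact hd ha1 ha2
    · ext a
      simp only [Finset.mem_univ, iff_true, Finset.mem_sup]
      have : g a ∈ q.sup id := by
        rw [h2, ← hs]; exact Finset.mem_image_of_mem g (Finset.mem_univ a)
      rw [Finset.mem_sup] at this
      obtain ⟨t, ht, hgt⟩ := this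
      exact ⟨t.preimage g hg.injOn, Finset.mem_image_of_mem _ ht,
        Finset.mem_preimage.2 hgt⟩
    · intro hbot
      rw [Finset.mem_image] at hbot
      obtain ⟨t, ht, hte⟩ := hbot
      have := hrec t ht
      rw [show (⊥ : Finset α) = ∅ from rfl] at hte
      rw [hte, Finset.image_empty] at this
      exact h3 (by rwa [← this] at ht)
    · rw [Finset.card_image_of_injOn]
      · exact h4
      · intro t1 ht1 t2 ht2 heq
        have heq' : t1.preimage g hg.injOn = t2.preimage g hg.injOn := heq
        rw [← hrec t1 (Finset.mem_coe.1 ht1), ← hrec t2 (Finset.mem_coe.1 ht2), heq']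
    · intro p hp
      rw [Finset.mem_image] at hp
      obtain ⟨t, ht, rfl⟩ := hp
      calc l ≤ t.card := h5 t ht
        _ = ((t.preimage g hg.injOn).image g).card := by rw [hrec t ht]
        _ = (t.preimage g hg.injOn).card := Finset.card_image_of_injective _ hg⟩
  left_inv q := by
    apply Subtype.ext
    simp only
    rw [Finset.image_image]
    have : ((fun t => Finset.preimage t g hg.injOn) ∘ Finset.image g) = id :=
      funext fun A => preimage_image' hg A
    rw [this, Finset.image_id]
  right_inv q := by
    apply Subtype.ext
    simp only
    rw [Finset.image_image]
    obtain ⟨q, h1, h2, h3, h4, h5⟩ := q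
    have hsub : ∀ t ∈ q, t ⊆ S := fun t ht => h2 ▸ Finset.le_sup (f := id) ht
    rw [show Finset.image ((Finset.image g) ∘ fun t => Finset.preimage t g hg.injOn) q
        = Finset.image id q from Finset.image_congr fun t ht =>
          recover_image hg hs (hsub t ht), Finset.image_id]

end Aux

/-- The associated Stirling number of the second kind `{n brace k}_{≥ ℓ}`: the number of
partitions of an `n`-element set into exactly `k` nonempty blocks, each of size at least `ℓ`. -/
noncomputable def stirlingGe (l n k : ℕ) : ℕ :=
  Nat.card {P : Finpartition (Finset.univ : Finset (Fin n)) //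
    P.parts.card = k ∧ ∀ B ∈ P.parts, l ≤ B.card}

/-- The mixed associated Stirling number of the second kind `S_{≥ ℓ}(n, k, r)`: the number of
pairs `(π, (B_2, …, B_k))` where `B_2, …, B_k` are pairwise disjoint nonempty subsets of
`{1, …, n}` of size at least `ℓ` and `π` is a partition of the complement of their union into
exactly `r` nonempty blocks, each of size at least `ℓ`. -/
noncomputable def mixedStirlingGe (l n k r : ℕ) : ℕ :=
  Nat.card {x : Σ B : Fin (k - 1) → Finset (Fin n),
      Finpartition ((Finset.univ : Finset (Fin n)) \ Finset.univ.biUnion B) //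
    (∀ i, (x.1 i).Nonempty) ∧ (∀ i, l ≤ (x.1 i).card) ∧
    (∀ i j, i ≠ j → Disjoint (x.1 i) (x.1 j)) ∧
    x.2.parts.card = r ∧ ∀ p ∈ x.2.parts, l ≤ p.card}

lemma natCard_partsCond {n : ℕ} (l r : ℕ) (S : Finset (Fin n)) :
    Nat.card {q : Finset (Finset (Fin n)) // PartsCond l r S q} = stirlingGe l S.card r := by
  rw [stirlingGe, natCard_partitions]
  set g : Fin S.card → Fin n := fun a => ↑(S.equivFin.symm a) with hgdef
  have hg : Function.Injective g :=
    fun a b h => S.equivFin.symm.injective (Subtype.val_injective h)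
  have hs : Finset.univ.image g = S := by
    ext b
    simp only [Finset.mem_image, Finset.mem_univ, true_and]
    constructor
    · rintro ⟨a, rfl⟩; exact (S.equivFin.symm a).2
    · intro hb; exact ⟨S.equivFin ⟨b, hb⟩, by simp [hgdef]⟩
  exact (Nat.card_congr (transportQ l r hg hs)).symm

lemma stirlingGe_eq_zero (l : ℕ) {i r : ℕ} (h : i < r) : stirlingGe l i r = 0 := by
  rw [stirlingGe]
  have : IsEmpty {P : Finpartition (Finset.univ : Finset (Fin i)) //
      P.parts.card = r ∧ ∀ B ∈ P.parts, l ≤ B.card} := by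
    constructor
    rintro ⟨P, hc, -⟩
    have h1 : P.parts.card ≤ ∑ p ∈ P.parts, p.card :=
      calc P.parts.card = ∑ _p ∈ P.parts, 1 := Finset.card_eq_sum_ones _
        _ ≤ ∑ p ∈ P.parts, p.card :=
            Finset.sum_le_sum fun p hp => (P.nonempty_of_mem_parts hp).card_pos
    rw [P.sum_card_parts] at h1
    simp only [Finset.card_univ, Fintype.card_fin] at h1
    omega
  exact Nat.card_of_isEmpty

lemma natCard_sigma' {ι : Type*} [Fintype ι] (f : ι → Type*) [∀ i, Finite (f i)] :
    Nat.card (Σ i, f i) = ∑ i, Nat.card (f i) := by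
  letI : ∀ i, Fintype (f i) := fun i => Fintype.ofFinite _
  simp [Nat.card_eq_fintype_card]

/-- Condition on a tuple of blocks. -/
def BCond {α : Type*} (l m : ℕ) (B : Fin m → Finset α) : Prop :=
  (∀ i, (B i).Nonempty) ∧ (∀ i, l ≤ (B i).card) ∧ ∀ i j, i ≠ j → Disjoint (B i) (B j)

section Tuples

variable {α : Type*} [Fintype α] [DecidableEq α]

lemma bInjective {l m : ℕ} {B : Fin m → Finset α} (hB : BCond l m B) :
    Function.Injective B := by
  intro i j hij
  by_contra hne
  have h := hB.2.2 i j hne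
  rw [hij, disjoint_self] at h
  exact (hB.1 j).ne_empty (by simpa using h)

lemma image_eq_of_partsCond {l m : ℕ} {U : Finset α} {q : Finset (Finset α)}
    {f : Fin m → Finset α} (hq : PartsCond l m U q) (hmem : ∀ i, f i ∈ q)
    (hinj : Function.Injective f) : Finset.univ.image f = q := by
  apply Finset.eq_of_subset_of_card_le
  · intro t ht
    rw [Finset.mem_image] at ht
    obtain ⟨i, -, rfl⟩ := ht
    exact hmem i
  · rw [Finset.card_image_of_injective _ hinj, Finset.card_univ, Fintype.card_fin,
      hq.2.2.2.1]

noncomputable def tupleEquiv (l m : ℕ) (U : Finset α) :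
    {B : Fin m → Finset α // BCond l m B ∧ Finset.univ.biUnion B = U} ≃
      {y : Finset (Finset α) × (Fin m → Finset α) //
        PartsCond l m U y.1 ∧ (∀ i, y.2 i ∈ y.1) ∧ Function.Injective y.2} where
  toFun := fun ⟨B, hB, hU⟩ => ⟨(Finset.univ.image B, B), by
    have hinj : Function.Injective B := bInjective hB
    refine ⟨⟨?_, ?_, ?_, ?_, ?_⟩, fun i => Finset.mem_image_of_mem B (Finset.mem_univ i), hinj⟩
    · rw [Finset.supIndep_iff_pairwiseDisjoint]
      rintro t1 ht1 t2 ht2 hne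
      simp only [Finset.coe_image, Set.mem_image, Finset.mem_coe] at ht1 ht2
      obtain ⟨i, -, rfl⟩ := ht1
      obtain ⟨j, -, rfl⟩ := ht2
      exact hB.2.2 i j (fun h => hne (by rw [h]))
    · rw [Finset.sup_image, Function.id_comp, Finset.sup_eq_biUnion]
      exact hU
    · intro hbot
      rw [Finset.mem_image] at hbot
      obtain ⟨i, -, hi⟩ := hbot
      exact (hB.1 i).ne_empty (by simpa using hi)
    · rw [Finset.card_image_of_injective _ hinj, Finset.card_univ, Fintype.card_fin]
    · intro p hp
      rw [Finset.mem_image] at hp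
      obtain ⟨i, -, rfl⟩ := hp
      exact hB.2.1 i⟩
  invFun := fun ⟨(q, f), hq, hmem, hinj⟩ => ⟨f, ⟨⟨
      fun i => Finset.nonempty_iff_ne_empty.2 fun h => hq.2.2.1
        (by have h2 : f i ∈ q := hmem i; rw [h] at h2; rwa [Finset.bot_eq_empty]),
      fun i => hq.2.2.2.2 _ (hmem i),
      fun i j hij => (Finset.supIndep_iff_pairwiseDisjoint.1 hq.1)
        (Finset.mem_coe.2 (hmem i)) (Finset.mem_coe.2 (hmem j)) (hinj.ne hij)⟩, by
    have himg := image_eq_of_partsCond hq hmem hinj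
    have h2 := hq.2.1
    rw [← himg, Finset.sup_image, Function.id_comp, Finset.sup_eq_biUnion] at h2
    exact h2⟩⟩
  left_inv := fun ⟨B, hB, hU⟩ => Subtype.ext rfl
  right_inv := fun ⟨(q, f), hq, hmem, hinj⟩ => by
    apply Subtype.ext
    show (Finset.univ.image f, f) = (q, f)
    rw [image_eq_of_partsCond hq hmem hinj]

lemma natCard_tuples (l m : ℕ) (U : Finset α) :
    Nat.card {B : Fin m → Finset α // BCond l m B ∧ Finset.univ.biUnion B = U} =
      Nat.card {q : Finset (Finset α) // PartsCond l m U q} * m.factorial := by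
  classical
  rw [Nat.card_congr ((tupleEquiv l m U).trans (Equiv.subtypeProdEquivSigmaSubtype
    (fun q f => PartsCond l m U q ∧ (∀ i, f i ∈ q) ∧ Function.Injective f)))]
  rw [natCard_sigma']
  have key : ∀ q : Finset (Finset α), Nat.card {f : Fin m → Finset α //
      PartsCond l m U q ∧ (∀ i, f i ∈ q) ∧ Function.Injective f} =
      if PartsCond l m U q then m.factorial else 0 := by
    intro q
    split_ifs with h
    · have e1 : {f : Fin m → Finset α //
          PartsCond l m U q ∧ (∀ i, f i ∈ q) ∧ Function.Injective f}
          ≃ (Fin m ↪ {x // x ∈ q}) := {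
        toFun := fun ⟨f, _, hmem, hinj⟩ => ⟨fun i => ⟨f i, hmem i⟩,
          fun i j hij => hinj (congrArg Subtype.val hij)⟩
        invFun := fun e => ⟨fun i => (e i).1, h, fun i => (e i).2,
          fun i j hij => e.injective (Subtype.ext hij)⟩
        left_inv := fun ⟨f, _, hmem, hinj⟩ => Subtype.ext rfl
        right_inv := fun e => by ext i; rfl }
      rw [Nat.card_congr e1, Nat.card_eq_fintype_card, Fintype.card_embedding_eq,
        Fintype.card_coe, h.2.2.2.1, Fintype.card_fin, Nat.descFactorial_self]
    · have : IsEmpty {f : Fin m → Finset α //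
          PartsCond l m U q ∧ (∀ i, f i ∈ q) ∧ Function.Injective f} := by
        constructor
        rintro ⟨f, hf, -⟩
        exact h hf
      exact Nat.card_of_isEmpty
  simp_rw [key]
  rw [Finset.sum_ite, Finset.sum_const, Finset.sum_const_zero, add_zero, smul_eq_mul]
  congr 1
  rw [Nat.card_eq_fintype_card, Fintype.card_subtype]

end Tuples

lemma natCard_fibers {γ : Type*} {ι : Type*} [Fintype ι] [Finite γ] (f : γ → ι) :
    Nat.card γ = ∑ i, Nat.card {a : γ // f a = i} := by
  rw [← natCard_sigma']
  exact (Nat.card_congr (Equiv.sigmaFiberEquiv f)).symm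

def mixedFlattenEquiv (l k r n : ℕ) :
    {x : Σ B : Fin (k - 1) → Finset (Fin n),
      Finpartition ((Finset.univ : Finset (Fin n)) \ Finset.univ.biUnion B) //
    (∀ i, (x.1 i).Nonempty) ∧ (∀ i, l ≤ (x.1 i).card) ∧
    (∀ i j, i ≠ j → Disjoint (x.1 i) (x.1 j)) ∧
    x.2.parts.card = r ∧ ∀ p ∈ x.2.parts, l ≤ p.card} ≃
    {z : (Fin (k - 1) → Finset (Fin n)) × Finset (Finset (Fin n)) //
      BCond l (k - 1) z.1 ∧
        PartsCond l r ((Finset.univ : Finset (Fin n)) \ Finset.univ.biUnion z.1) z.2} where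
  toFun := fun ⟨⟨B, π⟩, h1, h2, h3, h4, h5⟩ => ⟨(B, π.parts),
    ⟨h1, h2, h3⟩, π.supIndep, π.sup_parts, π.bot_notMem, h4, h5⟩
  invFun := fun ⟨(B, q), hB, hq1, hq2, hq3, hq4, hq5⟩ =>
    ⟨⟨B, ⟨q, hq1, hq2, hq3⟩⟩, hB.1, hB.2.1, hB.2.2, hq4, hq5⟩
  left_inv := fun ⟨⟨B, π⟩, h1, h2, h3, h4, h5⟩ =>
    Subtype.ext (Sigma.ext rfl (heq_of_eq (Finpartition.ext rfl)))
  right_inv := fun ⟨(B, q), hB, hq1, hq2, hq3, hq4, hq5⟩ => rfl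

def fiberEquiv (l k r n : ℕ) (S : Finset (Fin n)) :
    {z : (Fin (k - 1) → Finset (Fin n)) × Finset (Finset (Fin n)) //
      (BCond l (k - 1) z.1 ∧
        PartsCond l r ((Finset.univ : Finset (Fin n)) \ Finset.univ.biUnion z.1) z.2) ∧
      (Finset.univ : Finset (Fin n)) \ Finset.univ.biUnion z.1 = S} ≃
    {q : Finset (Finset (Fin n)) // PartsCond l r S q} ×
      {B : Fin (k - 1) → Finset (Fin n) // BCond l (k - 1) B ∧
        Finset.univ.biUnion B = Finset.univ \ S} where
  toFun := fun ⟨(B, q), ⟨hB, hq⟩, hS⟩ => (⟨q, hS ▸ hq⟩, ⟨B, hB, by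
    rw [← hS, Finset.sdiff_sdiff_self_left, Finset.univ_inter]⟩)
  invFun := fun ⟨⟨q, hq⟩, ⟨B, hB, hBU⟩⟩ => ⟨(B, q),
    ⟨⟨hB, by rw [hBU, Finset.sdiff_sdiff_self_left, Finset.univ_inter]; exact hq⟩,
    by rw [hBU, Finset.sdiff_sdiff_self_left, Finset.univ_inter]⟩⟩
  left_inv := fun ⟨(B, q), ⟨hB, hq⟩, hS⟩ => Subtype.ext rfl
  right_inv := fun ⟨⟨q, hq⟩, ⟨B, hB, hBU⟩⟩ => rfl

lemma mixed_eq_sum (l k r n : ℕ) :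
    mixedStirlingGe l n k r = ∑ S : Finset (Fin n),
      Nat.card {q : Finset (Finset (Fin n)) // PartsCond l r S q} *
        Nat.card {B : Fin (k - 1) → Finset (Fin n) //
          BCond l (k - 1) B ∧ Finset.univ.biUnion B = Finset.univ \ S} := by
  rw [mixedStirlingGe, Nat.card_congr (mixedFlattenEquiv l k r n)]
  rw [natCard_fibers (fun z => (Finset.univ : Finset (Fin n)) \ Finset.univ.biUnion z.1.1)]
  refine Finset.sum_congr rfl fun S _ => ?_
  rw [Nat.card_congr (((Equiv.subtypeSubtypeEquivSubtypeInter _ _).trans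
    (fiberEquiv l k r n S))), Nat.card_prod]

theorem mixedStirlingGe_eq_sum_stirlingGe (n k r l : ℕ)
    (hn : 1 ≤ n) (hk : 1 ≤ k) (hr : 1 ≤ r) (hl : 1 ≤ l) :
    mixedStirlingGe l n k r =
      ∑ i ∈ Finset.Icc r n,
        n.choose i * stirlingGe l i r * stirlingGe l (n - i) (k - 1) *
          (k - 1).factorial := by
  rw [mixed_eq_sum]
  have hstep : ∀ S : Finset (Fin n),
      Nat.card {q : Finset (Finset (Fin n)) // PartsCond l r S q} *
        Nat.card {B : Fin (k - 1) → Finset (Fin n) //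
          BCond l (k - 1) B ∧ Finset.univ.biUnion B = Finset.univ \ S} =
      stirlingGe l S.card r * (stirlingGe l (n - S.card) (k - 1) * (k - 1).factorial) := by
    intro S
    rw [natCard_partsCond, natCard_tuples, natCard_partsCond,
      Finset.card_sdiff_of_subset (Finset.subset_univ S), Finset.card_univ, Fintype.card_fin]
  simp_rw [hstep]
  rw [show (Finset.univ : Finset (Finset (Fin n))) = Finset.univ.powerset from
    (Finset.powerset_univ).symm, Finset.sum_powerset]
  have hcard : #(Finset.univ : Finset (Fin n)) = n := by
    rw [Finset.card_univ, Fintype.card_fin]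
  rw [hcard]  -- hope it rewrites in range (#univ + 1) and powersetCard arg
  have hinner : ∀ j ∈ Finset.range (n + 1),
      ∑ S ∈ Finset.powersetCard j (Finset.univ : Finset (Fin n)),
        stirlingGe l S.card r * (stirlingGe l (n - S.card) (k - 1) * (k - 1).factorial) =
      n.choose j * stirlingGe l j r * stirlingGe l (n - j) (k - 1) * (k - 1).factorial := by
    intro j _
    rw [Finset.sum_congr rfl (fun S hS => by
      rw [(Finset.mem_powersetCard.1 hS).2])]
    rw [Finset.sum_const, Finset.card_powersetCard, hcard, smul_eq_mul]
    ring
  rw [Finset.sum_congr rfl hinner]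
  refine (Finset.sum_subset ?_ ?_).symm
  · intro i hi
    rw [Finset.mem_Icc] at hi
    rw [Finset.mem_range]
    omega
  · intro i hi hni
    rw [Finset.mem_range] at hi
    rw [Finset.mem_Icc] at hni
    have : i < r := by omega
    rw [stirlingGe_eq_zero l this, mul_zero, zero_mul, zero_mul]
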